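/- Let 0 < ε < 1 and let integers r_min < r_max be given. If C satisfies −2^{r_min+1}·ln(ε) < C < −2^{r_max}·ln(1−ε), then for Y = ⌊-log₂(R)⌋ with R ~ EXP(C), P(Y ≤ r_min) < ε and P(Y ≥ r_max) < ε, so P(Y ∉ {r_min+1, ..., r_max−1}) < 2ε. -/

import Mathlib

open MeasureTheory ProbabilityTheory Real Set

lemma expMeasure_Iic {C : ℝ} (hC : 0 < C) (x : ℝ) :
    expMeasure C (Iic x) = ENNReal.ofReal (if 0 ≤ x then 1 - Real.exp (-(C * x)) else 0) := by
  haveI := isProbabilityMeasure_expMeasure hC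
  rw [← ofReal_cdf, cdf_expMeasure_eq hC]

/-- If `-2^{r_min+1}·ln ε < C < -2^{r_max}·ln (1-ε)`, then both tail probabilities of the
quantized exponential variable `Y = ⌊-log₂ R⌋`, `R ~ EXP(C)`, are below `ε`, and hence the
probability that `Y ∉ {r_min+1, …, r_max-1}` is below `2ε`. -/
theorem stmt_10 (ε : ℝ) (hε0 : 0 < ε) (hε1 : ε < 1) (rmin rmax : ℤ) (hr : rmin < rmax)
    (C : ℝ) (hC1 : -(2 : ℝ) ^ (rmin + 1) * Real.log ε < C)
    (hC2 : C < -(2 : ℝ) ^ rmax * Real.log (1 - ε)) :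
    (expMeasure C) {x : ℝ | ⌊-Real.logb 2 x⌋ ≤ rmin} < ENNReal.ofReal ε ∧
    (expMeasure C) {x : ℝ | rmax ≤ ⌊-Real.logb 2 x⌋} < ENNReal.ofReal ε ∧
    (expMeasure C) {x : ℝ | ⌊-Real.logb 2 x⌋ ≤ rmin ∨ rmax ≤ ⌊-Real.logb 2 x⌋}
      < ENNReal.ofReal (2 * ε) := by
  have hlogε : Real.log ε < 0 := Real.log_neg hε0 hε1
  have hC : 0 < C := by nlinarith [zpow_pos (two_pos (α := ℝ)) (rmin+1)]
  haveI := isProbabilityMeasure_expMeasure hC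
  set t : ℝ := (2 : ℝ) ^ (-(rmin + 1)) with ht
  set s : ℝ := (2 : ℝ) ^ (-rmax) with hs
  have ht0 : 0 < t := zpow_pos two_pos _
  have hs0 : 0 < s := zpow_pos two_pos _
  have htmul : t * (2 : ℝ) ^ (rmin + 1) = 1 := by
    rw [ht, ← zpow_add₀ (two_ne_zero (α := ℝ)), neg_add_cancel, zpow_zero]
  have hsmul : s * (2 : ℝ) ^ rmax = 1 := by
    rw [hs, ← zpow_add₀ (two_ne_zero (α := ℝ)), neg_add_cancel, zpow_zero]
  -- measure of Iic 0 is zero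
  have h0 : expMeasure C (Iic 0) = 0 := by
    rw [expMeasure_Iic hC]; simp
  -- set A ⊆ Iic 0 ∪ Ioi t
  have hA : {x : ℝ | ⌊-Real.logb 2 x⌋ ≤ rmin} ⊆ Iic 0 ∪ Ioi t := by
    intro x hx
    rcases le_or_gt x 0 with h | h
    · exact Or.inl h
    · refine Or.inr ?_
      have h1 : -Real.logb 2 x < (rmin : ℝ) + 1 := by
        have := (Int.floor_le_iff).mp hx
        push_cast at this ⊢; linarith
      have h2 : (-(rmin + 1) : ℝ) < Real.logb 2 x := by push_cast at h1 ⊢; linarith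
      have h3 : (2 : ℝ) ^ (-(rmin + 1) : ℝ) < x :=
        (Real.lt_logb_iff_rpow_lt one_lt_two h).mp h2
      rw [mem_Ioi, ht]
      calc (2:ℝ) ^ (-(rmin+1)) = (2:ℝ) ^ ((-(rmin+1) : ℤ) : ℝ) := (Real.rpow_intCast 2 _).symm
        _ < x := by push_cast; push_cast at h3; exact h3
  -- set B ⊆ Iic 0 ∪ Ioc 0 s
  have hB : {x : ℝ | rmax ≤ ⌊-Real.logb 2 x⌋} ⊆ Iic 0 ∪ Ioc 0 s := by
    intro x hx
    rcases le_or_gt x 0 with h | h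
    · exact Or.inl h
    · refine Or.inr ⟨h, ?_⟩
      have h1 : (rmax : ℝ) ≤ -Real.logb 2 x := by exact_mod_cast Int.le_floor.mp hx
      have h2 : Real.logb 2 x ≤ (-rmax : ℝ) := by push_cast at h1 ⊢; linarith
      have h3 : x ≤ (2 : ℝ) ^ ((-rmax : ℤ) : ℝ) :=
        (Real.logb_le_iff_le_rpow one_lt_two h).mp (by push_cast at h2 ⊢; linarith)
      rw [hs, ← Real.rpow_intCast 2 (-rmax)]
      exact h3
  -- bound on μ (Ioi t)
  have hIoi : expMeasure C (Ioi t) = ENNReal.ofReal (Real.exp (-(C * t))) := by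
    have hcompl : Ioi t = (Iic t)ᶜ := (compl_Iic).symm
    rw [hcompl, measure_compl measurableSet_Iic (measure_ne_top _ _), measure_univ,
      expMeasure_Iic hC, if_pos ht0.le]
    have he1 : Real.exp (-(C * t)) ≤ 1 := Real.exp_le_one_iff.mpr (by nlinarith)
    rw [← ENNReal.ofReal_one, ← ENNReal.ofReal_sub _ (by linarith [Real.exp_pos (-(C*t))])]
    norm_num
  -- tail 1 real bound
  have hexp1 : Real.exp (-(C * t)) < ε := by
    have : -Real.log ε < C * t := by nlinarith
    calc Real.exp (-(C * t)) < Real.exp (Real.log ε) := Real.exp_lt_exp.mpr (by linarith)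
      _ = ε := Real.exp_log hε0
  -- tail 2 real bound
  have hexp2 : 1 - Real.exp (-(C * s)) < ε := by
    have h1ε : 0 < 1 - ε := by linarith
    have heq : (-(2:ℝ) ^ rmax * Real.log (1 - ε)) * s = -Real.log (1 - ε) := by
      linear_combination (-Real.log (1 - ε)) * hsmul
    have : C * s < -Real.log (1 - ε) := heq ▸ mul_lt_mul_of_pos_right hC2 hs0
    have : Real.exp (Real.log (1 - ε)) < Real.exp (-(C * s)) := Real.exp_lt_exp.mpr (by linarith)
    rw [Real.exp_log h1ε] at this
    linarith
  -- measure bounds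
  have hμA : expMeasure C {x : ℝ | ⌊-Real.logb 2 x⌋ ≤ rmin} < ENNReal.ofReal ε := by
    calc expMeasure C {x : ℝ | ⌊-Real.logb 2 x⌋ ≤ rmin}
        ≤ expMeasure C (Iic 0 ∪ Ioi t) := measure_mono hA
      _ ≤ expMeasure C (Iic 0) + expMeasure C (Ioi t) := measure_union_le _ _
      _ = ENNReal.ofReal (Real.exp (-(C * t))) := by rw [h0, hIoi, zero_add]
      _ < ENNReal.ofReal ε := (ENNReal.ofReal_lt_ofReal_iff hε0).mpr hexp1
  have hμB : expMeasure C {x : ℝ | rmax ≤ ⌊-Real.logb 2 x⌋} < ENNReal.ofReal ε := by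
    calc expMeasure C {x : ℝ | rmax ≤ ⌊-Real.logb 2 x⌋}
        ≤ expMeasure C (Iic 0 ∪ Ioc 0 s) := measure_mono hB
      _ ≤ expMeasure C (Iic 0) + expMeasure C (Ioc 0 s) := measure_union_le _ _
      _ = expMeasure C (Ioc 0 s) := by rw [h0, zero_add]
      _ ≤ expMeasure C (Iic s) := measure_mono Ioc_subset_Iic_self
      _ = ENNReal.ofReal (1 - Real.exp (-(C * s))) := by
          rw [expMeasure_Iic hC, if_pos hs0.le]
      _ < ENNReal.ofReal ε := (ENNReal.ofReal_lt_ofReal_iff hε0).mpr hexp2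
  refine ⟨hμA, hμB, ?_⟩
  have hset : {x : ℝ | ⌊-Real.logb 2 x⌋ ≤ rmin ∨ rmax ≤ ⌊-Real.logb 2 x⌋}
      = {x : ℝ | ⌊-Real.logb 2 x⌋ ≤ rmin} ∪ {x : ℝ | rmax ≤ ⌊-Real.logb 2 x⌋} := rfl
  calc expMeasure C {x : ℝ | ⌊-Real.logb 2 x⌋ ≤ rmin ∨ rmax ≤ ⌊-Real.logb 2 x⌋}
      ≤ expMeasure C {x : ℝ | ⌊-Real.logb 2 x⌋ ≤ rmin}
        + expMeasure C {x : ℝ | rmax ≤ ⌊-Real.logb 2 x⌋} := by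
        rw [hset]; exact measure_union_le _ _
    _ < ENNReal.ofReal ε + ENNReal.ofReal ε := ENNReal.add_lt_add hμA hμB
    _ = ENNReal.ofReal (2 * ε) := by
        rw [← ENNReal.ofReal_add hε0.le hε0.le]; ring_nf
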